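/- Fix a positive integer k, natural numbers d_1, …, d_k, and FS^op-modules N_1, …, N_k such that N_i is d_i-small for each i, and set d = d_1 + ⋯ + d_k. Then the FS^op-module N defined by N(E) := ⊕_{f: E ↠ [k]} N_1(f⁻¹(1)) ⊗ ⋯ ⊗ N_k(f⁻¹(k)), where for a surjection g: E ↠ F the structure map N(F) → N(E) sends the summand indexed by f: F ↠ [k] to the summand indexed by f∘g via the tensor product of the structure maps of the N_i induced by the restricted surjections g: (f∘g)⁻¹(i) ↠ f⁻¹(i), is d-small. -/

import Mathlib

open CategoryTheory

/-- An object of the category `FS`: a nonempty finite set. -/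
structure FSObj : Type 1 where
  carrier : Type
  [fintype : Fintype carrier]
  [nonempty : Nonempty carrier]

attribute [instance] FSObj.fintype FSObj.nonempty

instance : CoeSort FSObj Type := ⟨FSObj.carrier⟩

/-- The category `FS` of nonempty finite sets with surjective maps. -/
instance : Category FSObj where
  Hom A B := {f : A → B // Function.Surjective f}
  id A := ⟨id, Function.surjective_id⟩
  comp f g := ⟨g.1 ∘ f.1, g.2.comp f.2⟩

/-- The standard object `[n] = {1, …, n}` of `FS`, modeled as `Fin n`, for `n ≥ 1`. -/
def FSn (n : ℕ) [NeZero n] : FSObj := ⟨Fin n⟩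

/-- An `FSᵒᵖ`-module: a contravariant functor from `FS` to complex vector spaces. -/
abbrev FSopModule : Type 1 := FSObjᵒᵖ ⥤ ModuleCat.{0} ℂ

/-- The value `N(n) := N([n])` of an `FSᵒᵖ`-module at `[n]`, as a representation of
the symmetric group `S_n = Aut([n])`. -/
def FSopModule.val (N : FSopModule) (n : ℕ) [NeZero n] : ModuleCat ℂ :=
  N.obj (Opposite.op (FSn n))

/-- The dimension of `N([n])`, with the junk value `0` when `n = 0`. -/
noncomputable def FSopModule.dim (N : FSopModule) : ℕ → ℕ
  | 0 => 0
  | (n + 1) => Module.finrank ℂ (N.val (n + 1))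

/-- The principal projective `FSᵒᵖ`-module at an object `A`, sending a finite set `E` to
the complex vector space with basis the set of surjections `E ↠ A`.  The principal
projective `P_m` of the paper is `PP (FSn m)`. -/
@[simps]
noncomputable def PP (A : FSObj) : FSopModule where
  obj E := ModuleCat.of ℂ ((E.unop ⟶ A) →₀ ℂ)
  map {E E'} g := ModuleCat.ofHom (Finsupp.lmapDomain ℂ ℂ (fun f => g.unop ≫ f))
  map_id _ := ModuleCat.hom_ext (LinearMap.ext fun _ => Finsupp.mapDomain_id)
  map_comp g h := ModuleCat.hom_ext <| LinearMap.ext fun _ =>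
    (Finsupp.mapDomain_comp (f := fun f => g.unop ≫ f) (g := fun f => h.unop ≫ f))

/-- The object `[m]` together with a positivity proof. -/
def finObj (m : ℕ) (h : 1 ≤ m) : FSObj :=
  { carrier := Fin m, nonempty := ⟨⟨0, h⟩⟩ }

/-- An `FSᵒᵖ`-module is finitely generated in degrees `≤ d` if it is the quotient of a
finite direct sum of principal projectives `P_m` with `m ≤ d`; equivalently, if there is
a finite family of maps from such principal projectives whose images jointly span. -/
def FinGenLE (d : ℕ) (N : FSopModule) : Prop :=
  ∃ (k : ℕ) (m : Fin k → ℕ) (hm : ∀ i, 1 ≤ m i ∧ m i ≤ d)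
    (T : ∀ i : Fin k, PP (finObj (m i) (hm i).1) ⟶ N),
    ∀ E : FSObjᵒᵖ, (⨆ i : Fin k, LinearMap.range ((T i).app E).hom) = ⊤

/-- An `FSᵒᵖ`-module is `d`-small if it is a subquotient of an `FSᵒᵖ`-module that is
finitely generated in degrees `≤ d`. -/
def IsSmall (d : ℕ) (N : FSopModule) : Prop :=
  ∃ (M M₀ : FSopModule) (_ : FinGenLE d M) (ι : M₀ ⟶ M) (π : M₀ ⟶ N),
    (∀ E : FSObjᵒᵖ, Function.Injective (ι.app E)) ∧
    (∀ E : FSObjᵒᵖ, Function.Surjective (π.app E))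
open CategoryTheory
open scoped TensorProduct

/-- The fiber `f⁻¹(a)` of a surjection `f : E ↠ A` in `FS`, as an object of `FS`. -/
noncomputable def fiberObj {E A : FSObj} (f : E ⟶ A) (a : A) : FSObj where
  carrier := {e : E // f.1 e = a}
  fintype := Fintype.ofFinite _
  nonempty := let ⟨e, he⟩ := f.2 a; ⟨⟨e, he⟩⟩

/-- The restriction of a surjection `g : E' ↠ E` to a surjection of fibers
`(g ≫ f)⁻¹(a) ↠ f⁻¹(a)`. -/
def fiberHom {E' E A : FSObj} (g : E' ⟶ E) (f : E ⟶ A) (a : A) :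
    fiberObj (g ≫ f) a ⟶ fiberObj f a :=
  ⟨fun e => ⟨g.1 e.1, e.2⟩, by
    rintro ⟨x, hx⟩
    obtain ⟨e, rfl⟩ := g.2 x
    exact ⟨⟨e, hx⟩, rfl⟩⟩

noncomputable instance (A B : FSObj) : DecidableEq (A ⟶ B) := Classical.decEq _

variable {k : ℕ} [NeZero k]

/-- The underlying space `⊕_{f : E ↠ [k]} N₁(f⁻¹(1)) ⊗ ⋯ ⊗ N_k(f⁻¹(k))` of the tensor
construction. -/
noncomputable abbrev tensorConstrObj (Ns : Fin k → FSopModule) (E : FSObj) : Type :=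
  DirectSum (E ⟶ FSn k) fun f => ⨂[ℂ] (i : Fin k), ((Ns i).obj (Opposite.op (fiberObj f i)))

/-- The structure map of the tensor construction along a surjection `g : E' ↠ E`:
it sends the summand indexed by `f : E ↠ [k]` to the summand indexed by
`f ∘ g = g ≫ f` via the tensor product of the structure maps of the `Nᵢ` induced by the
restricted surjections `(g ≫ f)⁻¹(i) ↠ f⁻¹(i)`. -/
noncomputable def tensorConstrMap (Ns : Fin k → FSopModule) {E' E : FSObj} (g : E' ⟶ E) :
    tensorConstrObj Ns E →ₗ[ℂ] tensorConstrObj Ns E' :=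
  DirectSum.toModule ℂ _ _ fun f =>
    (DirectSum.lof ℂ _ _ (g ≫ f)).comp
      (PiTensorProduct.map fun i => (((Ns i).map ((fiberHom g f i).op)).hom : _ →ₗ[ℂ] _))

lemma tensorConstrMap_lof_tprod (Ns : Fin k → FSopModule) {E' E : FSObj} (g : E' ⟶ E)
    (f : E ⟶ FSn k) (x : ∀ i : Fin k, ((Ns i).obj (Opposite.op (fiberObj f i)))) :
    tensorConstrMap Ns g (DirectSum.lof ℂ _
        (fun f => ⨂[ℂ] (i : Fin k), ((Ns i).obj (Opposite.op (fiberObj f i)))) f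
        (PiTensorProduct.tprod ℂ x)) =
      DirectSum.lof ℂ _
        (fun f => ⨂[ℂ] (i : Fin k), ((Ns i).obj (Opposite.op (fiberObj f i)))) (g ≫ f)
        (PiTensorProduct.tprod ℂ
          (fun i => (((Ns i).map ((fiberHom g f i).op)).hom : _ →ₗ[ℂ] _) (x i))) := by
  simp [tensorConstrMap, DirectSum.toModule_lof, PiTensorProduct.map_tprod]

/-- The tensor construction: the `FSᵒᵖ`-module
`N(E) := ⊕_{f : E ↠ [k]} N₁(f⁻¹(1)) ⊗ ⋯ ⊗ N_k(f⁻¹(k))`. -/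
noncomputable def tensorConstr (Ns : Fin k → FSopModule) : FSopModule where
  obj E := ModuleCat.of ℂ (tensorConstrObj Ns E.unop)
  map {E E'} φ := ModuleCat.ofHom (tensorConstrMap Ns φ.unop)
  map_id E := by
    refine ModuleCat.hom_ext (DirectSum.linearMap_ext _ fun f => PiTensorProduct.ext (MultilinearMap.ext fun x => ?_))
    refine (tensorConstrMap_lof_tprod Ns (𝟙 E.unop) f x).trans ?_
    exact congrArg (DirectSum.lof ℂ (E.unop ⟶ FSn k)
        (fun f => ⨂[ℂ] (i : Fin k), ((Ns i).obj (Opposite.op (fiberObj f i)))) f)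
      (congrArg (PiTensorProduct.tprod ℂ)
        (funext fun i => LinearMap.congr_fun
          (congrArg ModuleCat.Hom.hom ((Ns i).map_id (Opposite.op (fiberObj f i)))) (x i)))
  map_comp {E E' E''} φ ψ := by
    refine ModuleCat.hom_ext (DirectSum.linearMap_ext _ fun f => PiTensorProduct.ext (MultilinearMap.ext fun x => ?_))
    refine (tensorConstrMap_lof_tprod Ns (ψ.unop ≫ φ.unop) f x).trans ?_
    refine Eq.trans ?_
      ((congrArg (tensorConstrMap Ns ψ.unop) (tensorConstrMap_lof_tprod Ns φ.unop f x)).symm)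
    refine Eq.trans ?_ ((tensorConstrMap_lof_tprod Ns ψ.unop (φ.unop ≫ f) _).symm)
    exact congrArg (DirectSum.lof ℂ (E''.unop ⟶ FSn k)
        (fun f => ⨂[ℂ] (i : Fin k), ((Ns i).obj (Opposite.op (fiberObj f i))))
        (ψ.unop ≫ φ.unop ≫ f))
      (congrArg (PiTensorProduct.tprod ℂ)
        (funext fun i => LinearMap.congr_fun
          (congrArg ModuleCat.Hom.hom ((Ns i).map_comp ((fiberHom φ.unop f i).op)
            ((fiberHom ψ.unop (φ.unop ≫ f) i).op) : _)) (x i)))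



open CategoryTheory
open scoped TensorProduct

noncomputable section

variable {k : ℕ} [NeZero k]

/-- Pointwise map on the tensor construction induced by a family of linear maps. -/
def tcMapAt (Ms Ns : Fin k → FSopModule)
    (φ : ∀ (i : Fin k) (X : FSObjᵒᵖ), ((Ms i).obj X →ₗ[ℂ] (Ns i).obj X)) (E : FSObj) :
    tensorConstrObj Ms E →ₗ[ℂ] tensorConstrObj Ns E :=
  DirectSum.toModule ℂ _ _ fun f =>
    (DirectSum.lof ℂ _ _ f).comp
      (PiTensorProduct.map fun i => φ i (Opposite.op (fiberObj f i)))

lemma tcMapAt_lof_tprod (Ms Ns : Fin k → FSopModule)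
    (φ : ∀ (i : Fin k) (X : FSObjᵒᵖ), ((Ms i).obj X →ₗ[ℂ] (Ns i).obj X)) (E : FSObj)
    (f : E ⟶ FSn k) (x : ∀ i : Fin k, ((Ms i).obj (Opposite.op (fiberObj f i)))) :
    tcMapAt Ms Ns φ E (DirectSum.lof ℂ _
        (fun f => ⨂[ℂ] (i : Fin k), ((Ms i).obj (Opposite.op (fiberObj f i)))) f
        (PiTensorProduct.tprod ℂ x)) =
      DirectSum.lof ℂ _
        (fun f => ⨂[ℂ] (i : Fin k), ((Ns i).obj (Opposite.op (fiberObj f i)))) f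
        (PiTensorProduct.tprod ℂ (fun i => φ i (Opposite.op (fiberObj f i)) (x i))) := by
  simp [tcMapAt, DirectSum.toModule_lof, PiTensorProduct.map_tprod]

lemma tcMapAt_comp (Ms Ns Ps : Fin k → FSopModule)
    (φ : ∀ (i : Fin k) (X : FSObjᵒᵖ), ((Ms i).obj X →ₗ[ℂ] (Ns i).obj X))
    (ψ : ∀ (i : Fin k) (X : FSObjᵒᵖ), ((Ns i).obj X →ₗ[ℂ] (Ps i).obj X)) (E : FSObj) :
    (tcMapAt Ns Ps ψ E).comp (tcMapAt Ms Ns φ E) =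
      tcMapAt Ms Ps (fun i X => (ψ i X).comp (φ i X)) E := by
  refine DirectSum.linearMap_ext _ fun f => PiTensorProduct.ext (MultilinearMap.ext fun x => ?_)
  simp only [LinearMap.comp_apply, LinearMap.compMultilinearMap_apply]
  rw [tcMapAt_lof_tprod, tcMapAt_lof_tprod, tcMapAt_lof_tprod]
  rfl

lemma tcMapAt_id (Ms : Fin k → FSopModule) (E : FSObj) :
    tcMapAt Ms Ms (fun _ _ => LinearMap.id) E = LinearMap.id := by
  refine DirectSum.linearMap_ext _ fun f => PiTensorProduct.ext (MultilinearMap.ext fun x => ?_)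
  simp only [LinearMap.comp_apply, LinearMap.compMultilinearMap_apply]
  rw [tcMapAt_lof_tprod]
  rfl

lemma tcMapAt_injective (Ms Ns : Fin k → FSopModule)
    (φ : ∀ (i : Fin k) (X : FSObjᵒᵖ), ((Ms i).obj X →ₗ[ℂ] (Ns i).obj X))
    (hφ : ∀ i X, Function.Injective (φ i X)) (E : FSObj) :
    Function.Injective (tcMapAt Ms Ns φ E) := by
  have h : ∀ (i : Fin k) (X : FSObjᵒᵖ), ∃ ψ : (Ns i).obj X →ₗ[ℂ] (Ms i).obj X,
      ψ.comp (φ i X) = LinearMap.id := fun i X =>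
    (φ i X).exists_leftInverse_of_injective (LinearMap.ker_eq_bot.2 (hφ i X))
  choose ψ hψ using h
  have : (tcMapAt Ns Ms ψ E).comp (tcMapAt Ms Ns φ E) = LinearMap.id := by
    rw [tcMapAt_comp]
    have : (fun i X => (ψ i X).comp (φ i X)) =
        (fun (_ : Fin k) (_ : FSObjᵒᵖ) => (LinearMap.id : _ →ₗ[ℂ] _)) := by
      funext i X; exact hψ i X
    rw [this, tcMapAt_id]
  have : Function.LeftInverse (tcMapAt Ns Ms ψ E) (tcMapAt Ms Ns φ E) :=
    fun a => LinearMap.congr_fun this a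
  exact this.injective
lemma tcMapAt_surjective (Ms Ns : Fin k → FSopModule)
    (φ : ∀ (i : Fin k) (X : FSObjᵒᵖ), ((Ms i).obj X →ₗ[ℂ] (Ns i).obj X))
    (hφ : ∀ i X, Function.Surjective (φ i X)) (E : FSObj) :
    Function.Surjective (tcMapAt Ms Ns φ E) := by
  have h : ∀ (i : Fin k) (X : FSObjᵒᵖ), ∃ ψ : (Ns i).obj X →ₗ[ℂ] (Ms i).obj X,
      (φ i X).comp ψ = LinearMap.id := fun i X =>
    (φ i X).exists_rightInverse_of_surjective (LinearMap.range_eq_top.2 (hφ i X))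
  choose ψ hψ using h
  have hc : (tcMapAt Ms Ns φ E).comp (tcMapAt Ns Ms ψ E) = LinearMap.id := by
    rw [tcMapAt_comp]
    have : (fun i X => (φ i X).comp (ψ i X)) =
        (fun (_ : Fin k) (_ : FSObjᵒᵖ) => (LinearMap.id : _ →ₗ[ℂ] _)) := by
      funext i X; exact hψ i X
    rw [this, tcMapAt_id]
  intro y
  exact ⟨tcMapAt Ns Ms ψ E y, by rw [← LinearMap.comp_apply, hc]; rfl⟩

end

noncomputable section

variable {k : ℕ} [NeZero k]

open Opposite

/-- The natural transformation between tensor constructions induced by a family of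
natural transformations. -/
def tcNat {Ms Ns : Fin k → FSopModule} (α : ∀ i, Ms i ⟶ Ns i) :
    tensorConstr Ms ⟶ tensorConstr Ns where
  app E := ModuleCat.ofHom (tcMapAt Ms Ns (fun i X => ((α i).app X).hom) E.unop)
  naturality {E E'} φ := by
    refine ModuleCat.hom_ext (DirectSum.linearMap_ext _ fun f => PiTensorProduct.ext (MultilinearMap.ext fun x => ?_))
    simp only [LinearMap.comp_apply, LinearMap.compMultilinearMap_apply]
    show tcMapAt Ms Ns (fun i X => ((α i).app X).hom) E'.unop (tensorConstrMap Ms φ.unop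
        (DirectSum.lof ℂ _ _ f (PiTensorProduct.tprod ℂ x))) =
      tensorConstrMap Ns φ.unop (tcMapAt Ms Ns (fun i X => ((α i).app X).hom) E.unop
        (DirectSum.lof ℂ _ _ f (PiTensorProduct.tprod ℂ x)))
    rw [tensorConstrMap_lof_tprod, tcMapAt_lof_tprod, tcMapAt_lof_tprod,
      tensorConstrMap_lof_tprod]
    refine congrArg _ (congrArg _ (funext fun i => ?_))
    exact LinearMap.congr_fun (congrArg ModuleCat.Hom.hom ((α i).naturality ((fiberHom φ.unop f i).op))) (x i)

/-- The map of principal projectives induced by postcomposition with `u`. -/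
def PPmor {A B : FSObj} (u : A ⟶ B) : PP A ⟶ PP B where
  app E := ModuleCat.ofHom (Finsupp.lmapDomain ℂ ℂ (fun f : E.unop ⟶ A => f ≫ u))
  naturality {E E'} φ := by
    refine ModuleCat.hom_ext (Finsupp.lhom_ext fun f c => ?_)
    show Finsupp.mapDomain _ (Finsupp.mapDomain _ (Finsupp.single f c)) =
      Finsupp.mapDomain _ (Finsupp.mapDomain _ (Finsupp.single f c))
    simp only [Finsupp.mapDomain_single]
    rfl

lemma PPmor_surjective {A B : FSObj} (u : A ⟶ B) (v : B ⟶ A) (hv : v ≫ u = 𝟙 B)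
    (E : FSObjᵒᵖ) : Function.Surjective ((PPmor u).app E) := by
  rintro (y : (E.unop ⟶ B) →₀ ℂ)
  refine ⟨Finsupp.lmapDomain ℂ ℂ (fun f : E.unop ⟶ B => f ≫ v) y, ?_⟩
  show Finsupp.mapDomain _ (Finsupp.mapDomain _ y) = y
  rw [← Finsupp.mapDomain_comp]
  have : ((fun f : E.unop ⟶ A => f ≫ u) ∘ (fun f : E.unop ⟶ B => f ≫ v)) = id := by
    funext f
    show (f ≫ v) ≫ u = f
    rw [Category.assoc, hv, Category.comp_id]
  rw [this, Finsupp.mapDomain_id]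

/-- Finite generation passes along pointwise surjections. -/
lemma finGenLE_of_surjective {d : ℕ} {M M' : FSopModule} (S : M' ⟶ M)
    (hS : ∀ E : FSObjᵒᵖ, Function.Surjective (S.app E)) (h : FinGenLE d M') :
    FinGenLE d M := by
  obtain ⟨n, m, hm, T, hT⟩ := h
  refine ⟨n, m, hm, fun i => T i ≫ S, fun E => ?_⟩
  have : ∀ i : Fin n, LinearMap.range (((T i) ≫ S).app E).hom =
      Submodule.map (S.app E).hom (LinearMap.range ((T i).app E).hom) := by
    intro i
    rw [← LinearMap.range_comp]
    rfl
  simp only [this, ← Submodule.map_iSup, hT E, Submodule.map_top,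
    LinearMap.range_eq_top.2 (hS E)]

end

noncomputable section

open Opposite
open scoped TensorProduct

variable {k : ℕ} [NeZero k]

/-- Extract the second component of a sigma-type element whose first component is known. -/
def fiberSnd {α : Type*} {A : α → Type*} (s : Σ i, A i) (i : α) (h : s.1 = i) : A i :=
  h ▸ s.2

lemma fiberSnd_eq {α : Type*} {A : α → Type*} {s : Σ i, A i} {i : α} {a : A i}
    (hs : s = ⟨i, a⟩) (h : s.1 = i) : fiberSnd s i h = a := by
  subst hs; rfl

variable (m : Fin k → ℕ) (hm : ∀ i, 1 ≤ m i)

include hm in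
lemma sum_m_pos : 1 ≤ ∑ i, m i :=
  le_trans (hm (Classical.arbitrary (Fin k)))
    (Finset.single_le_sum (fun i _ => Nat.zero_le (m i)) (Finset.mem_univ _))

/-- The object `[∑ mᵢ]`. -/
def sumObj : FSObj := finObj (∑ i, m i) (sum_m_pos m hm)

/-- An equivalence `[∑ mᵢ] ≃ Σ i, [mᵢ]`. -/
def sigEquiv : (sumObj m hm).carrier ≃ Σ i : Fin k, Fin (m i) :=
  Fintype.equivOfCardEq (by simp [sumObj, finObj]; exact Fintype.card_fin _)

/-- The projection `[∑ mᵢ] ↠ [k]`. -/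
def projMor : sumObj m hm ⟶ FSn k :=
  ⟨fun x => (sigEquiv m hm x).1, by
    intro i
    refine ⟨(sigEquiv m hm).symm ⟨i, ⟨0, hm i⟩⟩, ?_⟩
    simp [Equiv.apply_symm_apply]⟩

variable {E : FSObj}

/-- From a surjection `h : E ↠ [∑ mᵢ]`, the induced surjection `E ↠ [k]`. -/
def thF (h : E ⟶ sumObj m hm) : E ⟶ FSn k := h ≫ projMor m hm

/-- From a surjection `h : E ↠ [∑ mᵢ]`, the induced surjection of fibers. -/
def thG (h : E ⟶ sumObj m hm) (i : Fin k) :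
    fiberObj (thF m hm h) i ⟶ finObj (m i) (hm i) :=
  ⟨fun x => fiberSnd (sigEquiv m hm (h.1 x.1)) i x.2, by
    intro t
    obtain ⟨e, he⟩ := h.2 ((sigEquiv m hm).symm ⟨i, t⟩)
    have hs : sigEquiv m hm (h.1 e) = ⟨i, t⟩ := by rw [he]; exact Equiv.apply_symm_apply _ _
    exact ⟨⟨e, congrArg Sigma.fst hs⟩, fiberSnd_eq hs _⟩⟩

/-- The comparison natural transformation
`P_{∑ mᵢ} ⟶ ⊕_f P_{m₁}(f⁻¹ 1) ⊗ ⋯ ⊗ P_{m_k}(f⁻¹ k)`. -/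
def theta : PP (sumObj m hm) ⟶ tensorConstr (fun i => PP (finObj (m i) (hm i))) where
  app E := ModuleCat.ofHom <| Finsupp.linearCombination ℂ fun h : E.unop ⟶ sumObj m hm =>
    DirectSum.lof ℂ _
      (fun f => ⨂[ℂ] (i : Fin k),
        ((PP (finObj (m i) (hm i))).obj (op (fiberObj f i)))) (thF m hm h)
      (PiTensorProduct.tprod ℂ fun i => (Finsupp.single (thG m hm h i) 1 :
        (fiberObj (thF m hm h) i ⟶ finObj (m i) (hm i)) →₀ ℂ))
  naturality {F F'} φ := by
    refine ModuleCat.hom_ext (Finsupp.lhom_ext fun h c => ?_)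
    show Finsupp.linearCombination ℂ _ (Finsupp.mapDomain _ (Finsupp.single h c)) =
      tensorConstrMap _ φ.unop (Finsupp.linearCombination ℂ _ (Finsupp.single h c))
    rw [Finsupp.mapDomain_single, Finsupp.linearCombination_single,
      Finsupp.linearCombination_single, map_smul]
    erw [tensorConstrMap_lof_tprod]
    have hc : (fun i => ((PP (finObj (m i) (hm i))).map (fiberHom φ.unop (thF m hm h) i).op).hom
          (Finsupp.single (thG m hm h i) 1)) =
        (fun i => (Finsupp.single (fiberHom φ.unop (thF m hm h) i ≫ thG m hm h i) (1 : ℂ) :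
          (fiberObj (φ.unop ≫ thF m hm h) i ⟶ finObj (m i) (hm i)) →₀ ℂ)) :=
      funext fun i => Finsupp.mapDomain_single
    rw [hc]
    rfl

end

noncomputable section

open Opposite
open scoped TensorProduct

variable {k : ℕ} [NeZero k] (m : Fin k → ℕ) (hm : ∀ i, 1 ≤ m i) {E : FSObj}

lemma hOf_aux (f : E ⟶ FSn k) (g : ∀ i, fiberObj f i ⟶ finObj (m i) (hm i)) (x : E)
    (i : Fin k) (hx : f.1 x = i) (t : Fin (m i)) (ht : (g i).1 ⟨x, hx⟩ = t) :
    (⟨f.1 x, (g (f.1 x)).1 ⟨x, rfl⟩⟩ : Σ j, Fin (m j)) = ⟨i, t⟩ := by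
  subst hx; subst ht; rfl

/-- A surjection `f : E ↠ [k]` together with surjections on the fibers assemble into a
surjection `E ↠ [∑ mᵢ]`. -/
def hOf (f : E ⟶ FSn k) (g : ∀ i, fiberObj f i ⟶ finObj (m i) (hm i)) : E ⟶ sumObj m hm :=
  ⟨fun x => (sigEquiv m hm).symm ⟨f.1 x, (g (f.1 x)).1 ⟨x, rfl⟩⟩, by
    intro y
    obtain ⟨⟨x, hx⟩, hgx⟩ := (g (sigEquiv m hm y).1).2 (sigEquiv m hm y).2
    refine ⟨x, ?_⟩
    show (sigEquiv m hm).symm _ = y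
    rw [hOf_aux m hm f g x _ hx _ hgx]
    exact (sigEquiv m hm).symm_apply_apply y⟩

lemma thF_hOf (f : E ⟶ FSn k) (g : ∀ i, fiberObj f i ⟶ finObj (m i) (hm i)) :
    thF m hm (hOf m hm f g) = f :=
  Subtype.ext (funext fun x => by
    show (sigEquiv m hm ((sigEquiv m hm).symm _)).1 = f.1 x
    rw [Equiv.apply_symm_apply])

lemma thG_hOf (f : E ⟶ FSn k) (g : ∀ i, fiberObj f i ⟶ finObj (m i) (hm i))
    (i : Fin k) (x : E) (hx1 : (thF m hm (hOf m hm f g)).1 x = i) (hx2 : f.1 x = i) :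
    (thG m hm (hOf m hm f g) i).1 ⟨x, hx1⟩ = (g i).1 ⟨x, hx2⟩ := by
  have hs : sigEquiv m hm ((hOf m hm f g).1 x) = ⟨i, (g i).1 ⟨x, hx2⟩⟩ := by
    show sigEquiv m hm ((sigEquiv m hm).symm _) = _
    rw [Equiv.apply_symm_apply]
    exact hOf_aux m hm f g x i hx2 _ rfl
  exact fiberSnd_eq hs hx1

lemma lof_tprod_congr (h : E ⟶ sumObj m hm) (f : E ⟶ FSn k) (hf : thF m hm h = f)
    (g : ∀ i, fiberObj f i ⟶ finObj (m i) (hm i))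
    (hg : ∀ (i : Fin k) (x : E) (hx1 : (thF m hm h).1 x = i) (hx2 : f.1 x = i),
      (thG m hm h i).1 ⟨x, hx1⟩ = (g i).1 ⟨x, hx2⟩) :
    DirectSum.lof ℂ (E ⟶ FSn k)
      (fun f => ⨂[ℂ] (i : Fin k), ((PP (finObj (m i) (hm i))).obj (op (fiberObj f i))))
      (thF m hm h)
      (PiTensorProduct.tprod ℂ fun i => (Finsupp.single (thG m hm h i) 1 :
        (fiberObj (thF m hm h) i ⟶ finObj (m i) (hm i)) →₀ ℂ)) =
    DirectSum.lof ℂ (E ⟶ FSn k)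
      (fun f => ⨂[ℂ] (i : Fin k), ((PP (finObj (m i) (hm i))).obj (op (fiberObj f i)))) f
      (PiTensorProduct.tprod ℂ fun i => (Finsupp.single (g i) 1 :
        (fiberObj f i ⟶ finObj (m i) (hm i)) →₀ ℂ)) := by
  subst hf
  have hG : thG m hm h = g :=
    funext fun i => Subtype.ext (funext fun x => hg i x.1 x.2 x.2)
  rw [hG]

lemma theta_app_surjective (F : FSObjᵒᵖ) :
    Function.Surjective ((theta m hm).app F) := by
  classical
  set R := LinearMap.range ((theta m hm).app F).hom with hR
  have hbasic : ∀ (f : F.unop ⟶ FSn k) (g : ∀ i, fiberObj f i ⟶ finObj (m i) (hm i)),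
      DirectSum.lof ℂ (F.unop ⟶ FSn k)
        (fun f => ⨂[ℂ] (i : Fin k), ((PP (finObj (m i) (hm i))).obj (op (fiberObj f i)))) f
        (PiTensorProduct.tprod ℂ fun i => (Finsupp.single (g i) 1 :
          (fiberObj f i ⟶ finObj (m i) (hm i)) →₀ ℂ)) ∈ R := by
    intro f g
    refine ⟨Finsupp.single (hOf m hm f g) 1, ?_⟩
    show (Finsupp.linearCombination ℂ _ : _ →ₗ[ℂ] tensorConstrObj (fun i => PP (finObj (m i) (hm i))) F.unop)
      (Finsupp.single _ (1:ℂ)) = _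
    rw [Finsupp.linearCombination_single, one_smul]
    exact lof_tprod_congr m hm _ f (thF_hOf m hm f g) g (thG_hOf m hm f g)
  have hmem : ∀ v : tensorConstrObj (fun i => PP (finObj (m i) (hm i))) F.unop, v ∈ R := by
    intro v
    induction v using DirectSum.induction_on with
    | zero => exact zero_mem R
    | add x y hx hy => exact add_mem hx hy
    | of f t =>
      rw [← DirectSum.lof_eq_of ℂ]
      induction t using PiTensorProduct.induction_on with
      | add x y hx hy => rw [map_add]; exact add_mem hx hy
      | smul_tprod r x =>
        rw [map_smul]
        refine Submodule.smul_mem R r ?_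
        set y : ∀ i, (fiberObj f i ⟶ finObj (m i) (hm i)) →₀ ℂ := fun i => x i with hy
        have hx : ∀ i, y i = ∑ a ∈ (y i).support, Finsupp.single a (y i a) :=
          fun i => (Finsupp.sum_single (y i)).symm
        have : (PiTensorProduct.tprod ℂ) x =
            (PiTensorProduct.tprod ℂ) (fun i => (∑ a ∈ (y i).support,
              Finsupp.single a (y i a) : (fiberObj f i ⟶ finObj (m i) (hm i)) →₀ ℂ)) := by
          exact congrArg _ (funext hx)
        rw [this, MultilinearMap.map_sum_finset]
        erw [map_sum]
        refine Submodule.sum_mem R fun p hp => ?_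
        have h1 : (fun i => Finsupp.single (p i) (y i (p i))) =
            fun i => (y i (p i)) • (Finsupp.single (p i) (1:ℂ) :
              (fiberObj f i ⟶ finObj (m i) (hm i)) →₀ ℂ) :=
          funext fun i => by rw [Finsupp.smul_single, smul_eq_mul, mul_one]
        rw [h1, MultilinearMap.map_smul_univ]
        erw [map_smul]
        exact Submodule.smul_mem R _ (hbasic f p)
  intro y
  obtain ⟨w, hw⟩ := hmem y
  exact ⟨w, hw⟩

end

noncomputable section

open Opposite
open scoped TensorProduct

variable {k : ℕ} [NeZero k]

lemma span_tcNat (Ms : Fin k → FSopModule) (nn : Fin k → ℕ) (mm : ∀ i, Fin (nn i) → ℕ)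
    (hmm1 : ∀ i j, 1 ≤ mm i j)
    (T : ∀ i j, PP (finObj (mm i j) (hmm1 i j)) ⟶ Ms i)
    (hT : ∀ i (X : FSObjᵒᵖ), (⨆ j, LinearMap.range ((T i j).app X).hom) = ⊤)
    (E : FSObjᵒᵖ) :
    (⨆ p : ∀ i, Fin (nn i),
      LinearMap.range ((tcNat (fun i => T i (p i))).app E).hom) = ⊤ := by
  classical
  rw [eq_top_iff]
  rintro v -
  induction v using DirectSum.induction_on with
  | zero => exact zero_mem _
  | add x y hx hy => exact add_mem hx hy
  | of f t =>
    rw [← DirectSum.lof_eq_of ℂ]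
    induction t using PiTensorProduct.induction_on with
    | add x y hx hy => rw [map_add]; exact add_mem hx hy
    | smul_tprod r x =>
      rw [map_smul]
      refine Submodule.smul_mem _ r ?_
      have hx : ∀ i, ∃ w : Fin (nn i) →₀ ((Ms i).obj (op (fiberObj f i))),
          (∀ j, w j ∈ LinearMap.range ((T i j).app (op (fiberObj f i))).hom) ∧
            (w.sum fun _ v => v) = x i := by
        intro i
        have : x i ∈ (⨆ j, LinearMap.range ((T i j).app (op (fiberObj f i))).hom) := by
          rw [hT i (op (fiberObj f i))]; trivial
        exact (Submodule.mem_iSup_iff_exists_finsupp _ _).1 this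
      choose w hw1 hw2 using hx
      have hsum : ∀ i, x i = ∑ j, w i j := by
        intro i
        rw [← hw2 i, Finsupp.sum_fintype]
        intro j; rfl
      have htp : (PiTensorProduct.tprod ℂ) x =
          (PiTensorProduct.tprod ℂ) (fun i => ∑ j, w i j) :=
        congrArg _ (funext hsum)
      rw [htp, MultilinearMap.map_sum, map_sum]
      refine Submodule.sum_mem _ fun p _ => ?_
      choose z hz using fun i => hw1 i (p i)
      have hzz : (fun i => w i (p i)) = fun i => ((T i (p i)).app (op (fiberObj f i))).hom (z i) :=
        funext fun i => (hz i).symm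
      rw [hzz]
      have : DirectSum.lof ℂ (E.unop ⟶ FSn k)
          (fun f => ⨂[ℂ] (i : Fin k), ((Ms i).obj (op (fiberObj f i)))) f
          (PiTensorProduct.tprod ℂ fun i => ((T i (p i)).app (op (fiberObj f i))).hom (z i)) =
          (tcNat (fun i => T i (p i))).app E
            (DirectSum.lof ℂ (E.unop ⟶ FSn k)
              (fun f => ⨂[ℂ] (i : Fin k),
                ((PP (finObj (mm i (p i)) (hmm1 i (p i)))).obj (op (fiberObj f i)))) f
              (PiTensorProduct.tprod ℂ z)) := by
        exact (tcMapAt_lof_tprod (fun i => PP (finObj (mm i (p i)) (hmm1 i (p i)))) Ms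
          (fun i X => ((T i (p i)).app X).hom) E.unop f z).symm
      rw [this]
      exact le_iSup (fun p : ∀ i, Fin (nn i) =>
        LinearMap.range ((tcNat (fun i => T i (p i))).app E).hom) p ⟨_, rfl⟩

end

noncomputable section

open Opposite

variable {k : ℕ} [NeZero k]

lemma finGenLE_tensorConstr (ds : Fin k → ℕ) (Ms : Fin k → FSopModule)
    (h : ∀ i, FinGenLE (ds i) (Ms i)) : FinGenLE (∑ i, ds i) (tensorConstr Ms) := by
  classical
  choose nn mm hmm T hT using h
  let I := ∀ i, Fin (nn i)
  let eqv : Fin (Fintype.card I) ≃ I := (Fintype.equivFin I).symm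
  refine ⟨Fintype.card I, fun c => ∑ i, mm i (eqv c i),
    fun c => ⟨sum_m_pos _ (fun i => (hmm i (eqv c i)).1),
      Finset.sum_le_sum fun i _ => (hmm i (eqv c i)).2⟩,
    fun c => theta (fun i => mm i (eqv c i)) (fun i => (hmm i (eqv c i)).1) ≫
      tcNat (fun i => T i (eqv c i)), fun E => ?_⟩
  have h1 : ∀ c, LinearMap.range
      (((theta (fun i => mm i (eqv c i)) (fun i => (hmm i (eqv c i)).1) ≫
        tcNat (fun i => T i (eqv c i))).app E).hom) =
      LinearMap.range ((tcNat (fun i => T i (eqv c i))).app E).hom := by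
    intro c
    show LinearMap.range (LinearMap.comp ((tcNat (fun i => T i (eqv c i))).app E).hom
      ((theta (fun i => mm i (eqv c i)) (fun i => (hmm i (eqv c i)).1)).app E).hom) = _
    rw [LinearMap.range_comp, LinearMap.range_eq_top.2 (theta_app_surjective _ _ E),
      Submodule.map_top]
  refine (iSup_congr h1).trans ?_
  rw [eqv.iSup_comp
    (g := fun p : I => LinearMap.range ((tcNat (fun i => T i (p i))).app E).hom)]
  exact span_tcNat Ms nn mm (fun i j => (hmm i j).1) T hT E

theorem isSmall_tensorConstr' (ds : Fin k → ℕ) (Ns : Fin k → FSopModule)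
    (hsmall : ∀ i, IsSmall (ds i) (Ns i)) :
    IsSmall (∑ i, ds i) (tensorConstr Ns) := by
  choose M Mz hfg ι π hι hπ using hsmall
  exact ⟨tensorConstr M, tensorConstr Mz, finGenLE_tensorConstr ds M hfg, tcNat ι, tcNat π,
    fun E => tcMapAt_injective Mz M (fun i X => ((ι i).app X).hom) (fun i X => hι i X) E.unop,
    fun E => tcMapAt_surjective Mz Ns (fun i X => ((π i).app X).hom) (fun i X => hπ i X) E.unop⟩

end

/-- if `Nᵢ` is a `dᵢ`-small `FSᵒᵖ`-module for `1 ≤ i ≤ k` and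
`d = d₁ + ⋯ + d_k`, then the `FSᵒᵖ`-module
`N(E) = ⊕_{f : E ↠ [k]} N₁(f⁻¹(1)) ⊗ ⋯ ⊗ N_k(f⁻¹(k))` is `d`-small. -/
theorem isSmall_tensorConstr (ds : Fin k → ℕ) (Ns : Fin k → FSopModule)
    (hsmall : ∀ i, IsSmall (ds i) (Ns i)) :
    IsSmall (∑ i, ds i) (tensorConstr Ns) :=
  isSmall_tensorConstr' ds Ns hsmall
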